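/- Let φ_μ := (1/(2κ))·∑_{q=1}^r μ_q·x_q/q. For every P in the polynomial ring ℂ[x_1,x_2,…][λ_1,…,λ_r,μ_1,…,μ_r], one has Φ^−_λ(z)(φ_μ·P) − φ_μ·Φ^−_λ(z)(P) = f_κ(z;λ,μ)·P; that is, the commutator [Φ^−_λ(z), φ_μ·] of the annihilation part of the coherent-state field with multiplication by φ_μ is scalar multiplication by the Laurent polynomial f_κ(z;λ,μ). -/

import Mathlib

/-!
STATEMENT 8.
Fix r ≥ 1 and κ ≠ 0.  Work in R := ℂ[x_1,x_2,…][λ_1,…,λ_r,μ_1,…,μ_r]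
(= `MvPolynomial (ℕ ⊕ (Fin r ⊕ Fin r)) ℂ`, where `Sum.inl i` is x_{i+1},
`Sum.inr (Sum.inl p)` is λ_{p+1} and `Sum.inr (Sum.inr q)` is μ_{q+1}).
For m ≥ 1, a_m := 2κm·∂/∂x_m.  The annihilation part of the coherent-state
field is the Laurent polynomial in z (given coefficientwise by `PhiMinus`,
the coefficient of `z^e`):
  Φ^−_λ(z)P := (1/(2κ))·∑_{n=1}^r (λ_n/n)·∑_{m≥1} (−1)^{n−1}·C(m+n−1,n−1)·z^{−m−n}·(a_m P).
Let φ_μ := (1/(2κ))·∑_{q=1}^r μ_q·x_q/q and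
  f_κ(z;λ,μ) := (1/(2κ))·∑_{1≤p,q≤r} C(p+q,p)·((−1)^{p+1}/(p+q))·λ_p·μ_q·z^{−(p+q)}
(coefficientwise: `fk r κ e` is the coefficient of `z^e`).
Then for every P ∈ R and every e ∈ ℤ,
  [Φ^−_λ(z), φ_μ·] P = f_κ(z;λ,μ)·P, coefficientwise in z.
-/

noncomputable section

abbrev R' (r : ℕ) : Type := MvPolynomial (ℕ ⊕ (Fin r ⊕ Fin r)) ℂ

/-- `a_m := 2κ m ∂/∂x_m` (for m ≥ 1; gives 0 at m = 0). -/
def aR (r : ℕ) (κ : ℂ) (m : ℕ) (P : R' r) : R' r :=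
  (2 * κ * (m : ℂ)) • MvPolynomial.pderiv (Sum.inl (m - 1)) P

/-- The coefficient of `z^e` in `Φ^−_λ(z)P`.  For `n : Fin r` (math index
`(n:ℕ)+1`), the term with `z^{−m−(n+1)}` contributes at `e` iff
`e = −(m+(n:ℕ)+1)` with `m ≥ 1`, i.e. iff `e ≤ −((n:ℕ)+2)`, in which case
`m = (−e).toNat − ((n:ℕ)+1)`. -/
def PhiMinus (r : ℕ) (κ : ℂ) (P : R' r) (e : ℤ) : R' r :=
  ∑ n : Fin r,
    if e ≤ -(((n : ℕ) : ℤ) + 2) then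
      ((1 / (2 * κ)) * (1 / (((n : ℕ) : ℂ) + 1)) * (-1 : ℂ) ^ ((n : ℕ)) *
          (Nat.choose (((-e).toNat - ((n : ℕ) + 1)) + (n : ℕ)) ((n : ℕ)) : ℂ)) •
        (MvPolynomial.X (Sum.inr (Sum.inl n)) *
          aR r κ ((-e).toNat - ((n : ℕ) + 1)) P)
    else 0

/-- `φ_μ := (1/(2κ)) ∑_{q=1}^r μ_q x_q / q`. -/
def phiMu (r : ℕ) (κ : ℂ) : R' r :=
  ∑ q : Fin r,
    MvPolynomial.C (1 / (2 * κ * (((q : ℕ) : ℂ) + 1)))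
      * MvPolynomial.X (Sum.inr (Sum.inr q)) * MvPolynomial.X (Sum.inl (q : ℕ))

/-- The coefficient of `z^e` in `f_κ(z;λ,μ)`. -/
def fk (r : ℕ) (κ : ℂ) (e : ℤ) : R' r :=
  ∑ p : Fin r, ∑ q : Fin r,
    if ((p : ℕ) + (q : ℕ) + 2 : ℤ) = -e then
      MvPolynomial.C
        ((1 / (2 * κ)) * (Nat.choose ((p : ℕ) + (q : ℕ) + 2) ((p : ℕ) + 1) : ℂ) *
          (-1 : ℂ) ^ ((p : ℕ) + 2) / (((p : ℕ) : ℂ) + ((q : ℕ) : ℂ) + 2))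
        * MvPolynomial.X (Sum.inr (Sum.inl p)) * MvPolynomial.X (Sum.inr (Sum.inr q))
    else 0

lemma pderiv_phiMu (r : ℕ) (κ : ℂ) (i : ℕ) :
    MvPolynomial.pderiv (Sum.inl i : ℕ ⊕ (Fin r ⊕ Fin r)) (phiMu r κ)
      = if h : i < r then
          MvPolynomial.C (1 / (2 * κ * ((i : ℂ) + 1))) *
            MvPolynomial.X (Sum.inr (Sum.inr (⟨i, h⟩ : Fin r))) else 0 := by
  unfold phiMu
  rw [map_sum]
  by_cases h : i < r
  · rw [dif_pos h, Finset.sum_eq_single (⟨i, h⟩ : Fin r)]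
    · simp [MvPolynomial.pderiv_mul, MvPolynomial.pderiv_X, Pi.single_apply]
    · intro q _ hq
      have hqi : (q : ℕ) ≠ i := fun hh => hq (by ext; simp [hh])
      simp [MvPolynomial.pderiv_mul, MvPolynomial.pderiv_X, Pi.single_apply, hqi]
    · simp
  · rw [dif_neg h]
    apply Finset.sum_eq_zero
    intro q _
    have hqi : (q : ℕ) ≠ i := by have := q.2; omega
    simp [MvPolynomial.pderiv_mul, MvPolynomial.pderiv_X, Pi.single_apply, hqi]

lemma aR_phiMu (r : ℕ) (κ : ℂ) (hκ : κ ≠ 0) (m : ℕ) (hm : 1 ≤ m) :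
    aR r κ m (phiMu r κ)
      = if h : m - 1 < r then
          MvPolynomial.X (Sum.inr (Sum.inr (⟨m - 1, h⟩ : Fin r))) else 0 := by
  unfold aR
  rw [pderiv_phiMu]
  by_cases h : m - 1 < r
  · rw [dif_pos h, dif_pos h, MvPolynomial.C_mul', smul_smul]
    have hmc : ((m - 1 : ℕ) : ℂ) + 1 = (m : ℂ) := by
      have h1 : (m - 1) + 1 = m := by omega
      exact_mod_cast congrArg (Nat.cast : ℕ → ℂ) h1
    have hm0 : (m : ℂ) ≠ 0 := Nat.cast_ne_zero.mpr (by omega)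
    rw [hmc]
    have : 2 * κ * (m : ℂ) * (1 / (2 * κ * (m : ℂ))) = 1 := by field_simp
    rw [this, one_smul]
  · rw [dif_neg h, dif_neg h, smul_zero]

lemma coeff_id (κ : ℂ) (hκ : κ ≠ 0) (n m' : ℕ) :
    (1 / (2 * κ)) * (1 / ((n : ℂ) + 1)) * (-1 : ℂ) ^ n *
        (Nat.choose ((m' + 1) + n) n : ℂ)
      = (1 / (2 * κ)) * (Nat.choose (n + m' + 2) (n + 1) : ℂ) * (-1 : ℂ) ^ (n + 2)
          / ((n : ℂ) + (m' : ℂ) + 2) := by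
  have key : ((m' + n + 2 : ℕ) : ℂ) * (Nat.choose (m' + n + 1) n : ℂ)
      = (Nat.choose (m' + n + 2) (n + 1) : ℂ) * ((n + 1 : ℕ) : ℂ) := by
    exact_mod_cast congrArg (Nat.cast : ℕ → ℂ) (Nat.add_one_mul_choose_eq (m' + n + 1) n)
  have e1 : (m' + 1) + n = m' + n + 1 := by ring
  have e2 : n + m' + 2 = m' + n + 2 := by ring
  rw [e1, e2]
  push_cast at key ⊢
  have h1 : ((n : ℂ) + 1) ≠ 0 := by
    have : ((n + 1 : ℕ) : ℂ) ≠ 0 := Nat.cast_ne_zero.mpr (by omega)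
    push_cast at this; exact this
  have h2 : ((n : ℂ) + (m' : ℂ) + 2) ≠ 0 := by
    have : ((n + m' + 2 : ℕ) : ℂ) ≠ 0 := Nat.cast_ne_zero.mpr (by omega)
    push_cast at this; exact this
  field_simp
  linear_combination ((-1 : ℂ) ^ n) * key

theorem statement8 (r : ℕ) (hr : 1 ≤ r) (κ : ℂ) (hκ : κ ≠ 0) (P : R' r) (e : ℤ) :
    PhiMinus r κ (phiMu r κ * P) e - phiMu r κ * PhiMinus r κ P e
      = fk r κ e * P := by
  unfold PhiMinus fk
  rw [Finset.mul_sum, ← Finset.sum_sub_distrib, Finset.sum_mul]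
  refine Finset.sum_congr rfl fun n _ => ?_
  rw [Finset.sum_mul]
  simp only [mul_ite, mul_zero, ite_mul, zero_mul]
  set m : ℕ := (-e).toNat - ((n : ℕ) + 1) with hmdef
  by_cases hc : e ≤ -(((n : ℕ) : ℤ) + 2)
  · rw [if_pos hc, if_pos hc]
    have hm1 : 1 ≤ m := by omega
    have hne : -e = (m : ℤ) + (n : ℕ) + 1 := by omega
    have hmul : aR r κ m (phiMu r κ * P)
        = aR r κ m (phiMu r κ) * P + phiMu r κ * aR r κ m P := by
      unfold aR
      rw [MvPolynomial.pderiv_mul, smul_add, smul_mul_assoc, mul_smul_comm]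
    rw [hmul, aR_phiMu r κ hκ m hm1]
    by_cases h : m - 1 < r
    · rw [dif_pos h]
      rw [Finset.sum_eq_single_of_mem (⟨m - 1, h⟩ : Fin r) (Finset.mem_univ _)
        (fun q _ hq => by
          rw [if_neg]
          intro hcond
          apply hq
          ext
          simp only
          omega)]
      rw [if_pos (by simp only; omega)]
      have hcoef := coeff_id κ hκ (n : ℕ) (m - 1)
      have hm1' : (m - 1) + 1 = m := by omega
      rw [hm1'] at hcoef
      simp only [← MvPolynomial.C_mul', hcoef]
      ring
    · rw [dif_neg h]
      rw [Finset.sum_eq_zero (fun q _ => by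
        rw [if_neg]
        intro hcond
        have := q.2
        omega)]
      simp only [← MvPolynomial.C_mul']
      ring
  · rw [if_neg hc, if_neg hc]
    rw [Finset.sum_eq_zero (fun q _ => by
      rw [if_neg]
      intro hcond
      omega)]
    simp

end
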